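/- The sum over n ≥ 1 of H_{n,4}/n^2 equals (25/3)ζ(6) − 3ζ(2)ζ(4) − ζ(3)^2, where H_{n,4} = ∑_{j=1}^n 1/j^4. -/

import Mathlib

open Finset Filter Real Topology

/-- Generalized harmonic number `H_{n,4} = ∑_{j=1}^n 1/j^4`. -/
noncomputable def H4 (n : ℕ) : ℝ := ∑ j ∈ Finset.range n, 1 / ((j + 1 : ℝ)) ^ 4

/-- `ζ(r) = ∑_{n ≥ 1} 1/n^r`. -/
noncomputable def zetaR (r : ℕ) : ℝ := ∑' n : ℕ, 1 / ((n + 1 : ℝ)) ^ r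

noncomputable def Hg (r n : ℕ) : ℝ := ∑ j ∈ Finset.range n, 1 / ((j : ℝ) + 1) ^ r


noncomputable def TT (a b : ℕ) : ℝ :=
  ∑' p : ℕ × ℕ, 1 / (((p.1 : ℝ) + 1) ^ a * ((p.1 : ℝ) + p.2 + 2) ^ b)

lemma sumz {r : ℕ} (hr : 2 ≤ r) : Summable (fun n : ℕ => 1 / ((n : ℝ) + 1) ^ r) := by
  have h := (Real.summable_one_div_nat_pow (p := r)).mpr (by omega)
  have := (summable_nat_add_iff (f := fun n : ℕ => 1 / (n : ℝ) ^ r) 1).mpr h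
  simpa using this

lemma sumz_shift {r : ℕ} (hr : 2 ≤ r) (k : ℕ) :
    Summable (fun m : ℕ => 1 / ((m : ℝ) + (k : ℝ) + 2) ^ r) := by
  have := (summable_nat_add_iff (f := fun n : ℕ => 1 / ((n : ℝ) + 1) ^ r) (k + 1)).mpr (sumz hr)
  refine this.congr fun m => ?_
  push_cast
  ring_nf

lemma tail_eq {r : ℕ} (hr : 2 ≤ r) (k : ℕ) :
    ∑' m : ℕ, 1 / ((m : ℝ) + (k : ℝ) + 2) ^ r = zetaR r - Hg r (k + 1) := by
  have h := Summable.sum_add_tsum_nat_add (f := fun n : ℕ => 1 / ((n : ℝ) + 1) ^ r) (k + 1) (sumz hr)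
  have h2 : ∑' m : ℕ, 1 / ((m : ℝ) + (k : ℝ) + 2) ^ r
      = ∑' m : ℕ, 1 / (((m + (k + 1) : ℕ) : ℝ) + 1) ^ r := by
    refine tsum_congr fun m => ?_
    push_cast
    ring_nf
  rw [h2]
  have : zetaR r = ∑' n : ℕ, 1 / ((n : ℝ) + 1) ^ r := by
    unfold zetaR; rfl
  rw [Hg, this]
  linarith [h]


lemma tele (c : ℕ) :
    HasSum (fun m : ℕ => 1 / ((m : ℝ) + c + 1) - 1 / ((m : ℝ) + c + 2)) (1 / ((c : ℝ) + 1)) := by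
  rw [hasSum_iff_tendsto_nat_of_nonneg]
  · have key : ∀ M : ℕ, ∑ m ∈ range M, (1 / ((m : ℝ) + c + 1) - 1 / ((m : ℝ) + c + 2))
        = 1 / ((c : ℝ) + 1) - 1 / ((M : ℝ) + c + 1) := by
      intro M
      have h := Finset.sum_range_sub' (f := fun m : ℕ => 1 / ((m : ℝ) + c + 1)) M
      have h2 : ∑ m ∈ range M, (1 / ((m : ℝ) + c + 1) - 1 / ((m : ℝ) + c + 2))
          = ∑ i ∈ range M, ((fun m : ℕ => 1 / ((m : ℝ) + c + 1)) i
              - (fun m : ℕ => 1 / ((m : ℝ) + c + 1)) (i + 1)) := by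
        refine Finset.sum_congr rfl fun i _ => ?_
        push_cast
        ring_nf
      rw [h2, h]
      norm_num
    simp_rw [key]
    have h0 : Tendsto (fun M : ℕ => 1 / ((M : ℝ) + c + 1)) atTop (𝓝 0) := by
      have := (tendsto_one_div_add_atTop_nhds_zero_nat (𝕜 := ℝ)).comp (tendsto_add_atTop_nat c)
      refine this.congr fun M => ?_
      simp only [Function.comp_apply]
      push_cast
      ring_nf
    have := (tendsto_const_nhds (x := 1 / ((c : ℝ) + 1)) (f := atTop (α := ℕ))).sub h0
    simpa using this
  · intro m
    have h1 : (0:ℝ) < (m : ℝ) + c + 1 := by positivity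
    have h2 : ((m : ℝ) + c + 1) ≤ (m : ℝ) + c + 2 := by linarith
    have := one_div_le_one_div_of_le h1 h2
    linarith

lemma tele2 (k : ℕ) :
    HasSum (fun m : ℕ => 1 / ((m : ℝ) + 1) - 1 / ((m : ℝ) + k + 2)) (Hg 1 (k + 1)) := by
  have hfun : ∀ m : ℕ, 1 / ((m : ℝ) + 1) - 1 / ((m : ℝ) + k + 2)
      = ∑ i ∈ range (k + 1), (1 / ((m : ℝ) + i + 1) - 1 / ((m : ℝ) + i + 2)) := by
    intro m
    have h := Finset.sum_range_sub' (f := fun i : ℕ => 1 / ((m : ℝ) + i + 1)) (k + 1)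
    have h2 : ∑ i ∈ range (k+1), (1 / ((m : ℝ) + i + 1) - 1 / ((m : ℝ) + i + 2))
        = ∑ i ∈ range (k+1), ((fun i : ℕ => 1 / ((m : ℝ) + i + 1)) i
            - (fun i : ℕ => 1 / ((m : ℝ) + i + 1)) (i + 1)) := by
      refine Finset.sum_congr rfl fun i _ => ?_
      push_cast
      ring_nf
    rw [h2, h]
    push_cast
    ring_nf
  have hs : HasSum (fun m : ℕ => ∑ i ∈ range (k + 1),
      (1 / ((m : ℝ) + i + 1) - 1 / ((m : ℝ) + i + 2)))
      (∑ i ∈ range (k + 1), 1 / ((i : ℝ) + 1)) :=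
    hasSum_sum fun i _ => tele i
  simp_rw [hfun]
  have : Hg 1 (k + 1) = ∑ i ∈ range (k + 1), 1 / ((i : ℝ) + 1) := by
    simp [Hg]
  rw [this]
  exact hs
lemma summableT {a b : ℕ} (ha : 1 ≤ a) (hb : 2 ≤ b) (hab : 6 ≤ a + b) :
    Summable (fun p : ℕ × ℕ => 1 / (((p.1 : ℝ) + 1) ^ a * ((p.1 : ℝ) + p.2 + 2) ^ b)) := by
  have hs : Summable (fun p : ℕ × ℕ => (1 / ((p.1 : ℝ) + 1) ^ 2) * (1 / ((p.2 : ℝ) + 1) ^ 2)) :=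
    Summable.mul_of_nonneg (f := fun n : ℕ => 1 / ((n : ℝ) + 1) ^ 2)
      (g := fun n : ℕ => 1 / ((n : ℝ) + 1) ^ 2) (sumz le_rfl) (sumz le_rfl)
      (fun n => by positivity) (fun n => by positivity)
  refine hs.of_nonneg_of_le (fun p => by positivity) fun p => ?_
  obtain ⟨m, g⟩ := p
  rw [div_mul_div_comm, one_mul]
  apply one_div_le_one_div_of_le (by positivity)
  have hm : (0 : ℝ) ≤ (m : ℝ) := Nat.cast_nonneg m
  have hgg : (0 : ℝ) ≤ (g : ℝ) := Nat.cast_nonneg g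
  have h1 : (1 : ℝ) ≤ (m : ℝ) + 1 := by linarith
  have h2 : ((m : ℝ) + 1) ≤ (m : ℝ) + g + 2 := by linarith
  have h3 : ((g : ℝ) + 1) ≤ (m : ℝ) + g + 2 := by linarith
  calc ((m : ℝ) + 1) ^ 2 * ((g : ℝ) + 1) ^ 2
      ≤ ((m : ℝ) + 1) ^ (a + (b - 2)) * ((g : ℝ) + 1) ^ 2 := by
        gcongr
        · omega
    _ = ((m : ℝ) + 1) ^ a * (((m : ℝ) + 1) ^ (b - 2) * ((g : ℝ) + 1) ^ 2) := by
        rw [pow_add]; ring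
    _ ≤ ((m : ℝ) + 1) ^ a * (((m : ℝ) + g + 2) ^ (b - 2) * ((m : ℝ) + g + 2) ^ 2) := by
        gcongr <;> linarith
    _ = ((m : ℝ) + 1) ^ a * ((m : ℝ) + g + 2) ^ b := by
        rw [← pow_add, Nat.sub_add_cancel hb]

lemma summableS {b a : ℕ} (hb : 1 ≤ b) (ha : 2 ≤ a) (hab : 6 ≤ a + b) :
    Summable (fun p : ℕ × ℕ =>
      if p.2 ≤ p.1 then 1 / (((p.2 : ℝ) + 1) ^ b * ((p.1 : ℝ) + 1) ^ a) else 0) := by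
  have hs : Summable (fun p : ℕ × ℕ => (1 / ((p.1 : ℝ) + 1) ^ 2) * (1 / ((p.2 : ℝ) + 1) ^ 2)) :=
    Summable.mul_of_nonneg (f := fun n : ℕ => 1 / ((n : ℝ) + 1) ^ 2)
      (g := fun n : ℕ => 1 / ((n : ℝ) + 1) ^ 2) (sumz le_rfl) (sumz le_rfl)
      (fun n => by positivity) (fun n => by positivity)
  refine hs.of_nonneg_of_le (fun p => by positivity) fun p => ?_
  obtain ⟨n, j⟩ := p
  by_cases h : j ≤ n
  · rw [if_pos h, div_mul_div_comm, one_mul]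
    apply one_div_le_one_div_of_le (by positivity)
    have hj0 : (0 : ℝ) ≤ (j : ℝ) := Nat.cast_nonneg j
    have h1 : (1 : ℝ) ≤ (j : ℝ) + 1 := by linarith
    have hjn : ((j : ℝ) + 1) ≤ (n : ℝ) + 1 := by
      have := (Nat.cast_le (α := ℝ)).mpr h
      linarith
    calc ((n : ℝ) + 1) ^ 2 * ((j : ℝ) + 1) ^ 2
        ≤ ((n : ℝ) + 1) ^ 2 * ((j : ℝ) + 1) ^ (b + (a - 2)) := by
          gcongr
          · omega
      _ = ((j : ℝ) + 1) ^ b * (((j : ℝ) + 1) ^ (a - 2) * ((n : ℝ) + 1) ^ 2) := by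
          rw [pow_add]; ring
      _ ≤ ((j : ℝ) + 1) ^ b * (((n : ℝ) + 1) ^ (a - 2) * ((n : ℝ) + 1) ^ 2) := by
          gcongr <;> linarith
      _ = ((j : ℝ) + 1) ^ b * ((n : ℝ) + 1) ^ a := by
          rw [← pow_add, Nat.sub_add_cancel ha]
  · rw [if_neg h]
    positivity

lemma step1 {b a : ℕ} (n : ℕ) :
    Hg b (n + 1) * (1 / ((n : ℝ) + 1) ^ a)
      = ∑' j : ℕ, (if j ≤ n then 1 / (((j : ℝ) + 1) ^ b * ((n : ℝ) + 1) ^ a) else 0) := by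
  rw [tsum_eq_sum (s := range (n + 1))
    (fun j hj => if_neg (fun hle => hj (mem_range.mpr (Nat.lt_succ_of_le hle))))]
  rw [Hg, Finset.sum_mul]
  refine Finset.sum_congr rfl fun j hj => ?_
  rw [if_pos (Nat.lt_succ_iff.mp (mem_range.mp hj)), div_mul_div_comm, one_mul]

lemma hSsum {b a : ℕ} (hb : 1 ≤ b) (ha : 2 ≤ a) (hab : 6 ≤ a + b) :
    Summable (fun n : ℕ => Hg b (n + 1) * (1 / ((n : ℝ) + 1) ^ a)) := by
  have h := (summableS hb ha hab).prod
  refine h.congr fun n => ?_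
  exact (step1 n).symm

lemma S_eq {b a : ℕ} (hb : 1 ≤ b) (ha : 2 ≤ a) (hab : a + b = 6) :
    ∑' n : ℕ, Hg b (n + 1) * (1 / ((n : ℝ) + 1) ^ a) = zetaR 6 + TT b a := by
  have hab' : 6 ≤ a + b := le_of_eq hab.symm
  have hS := summableS hb ha hab'
  set f : ℕ → ℕ → ℝ :=
    fun n j => if j ≤ n then 1 / (((j : ℝ) + 1) ^ b * ((n : ℝ) + 1) ^ a) else 0 with hf
  have hSu : Summable (Function.uncurry f) := hS
  have l1 : ∑' n : ℕ, Hg b (n + 1) * (1 / ((n : ℝ) + 1) ^ a) = ∑' (n : ℕ) (j : ℕ), f n j :=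
    tsum_congr fun n => step1 n
  have lswap : ∑' (j : ℕ) (n : ℕ), f n j = ∑' (n : ℕ) (j : ℕ), f n j := Summable.tsum_comm hSu
  have l3 : ∀ j : ℕ, (∑' n : ℕ, f n j)
      = 1 / ((j : ℝ) + 1) ^ 6 + ∑' i : ℕ, 1 / (((j : ℝ) + 1) ^ b * ((j : ℝ) + i + 2) ^ a) := by
    intro j
    have hcol : Summable fun n => f n j := (hS.prod_symm).prod_factor j
    have h4 := Summable.sum_add_tsum_nat_add (f := fun n => f n j) j hcol
    have h5 : ∑ n ∈ range j, f n j = 0 := by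
      refine Finset.sum_eq_zero fun n hn => ?_
      simp only [hf]
      have := mem_range.mp hn
      rw [if_neg (by omega)]
    have h6 : ∑' i : ℕ, f (i + j) j
        = ∑' i : ℕ, 1 / (((j : ℝ) + 1) ^ b * (((i : ℕ) + j : ℝ) + 1) ^ a) := by
      refine tsum_congr fun i => ?_
      simp only [hf]
      rw [if_pos (Nat.le_add_left j i)]
      push_cast
      ring_nf
    have hshift : Summable fun i : ℕ => 1 / (((j : ℝ) + 1) ^ b * (((i : ℕ) + j : ℝ) + 1) ^ a) := by
      refine ((summable_nat_add_iff (f := fun n => f n j) j).mpr hcol).congr fun i => ?_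
      simp only [hf]
      rw [if_pos (Nat.le_add_left j i)]
      push_cast
      ring_nf
    have h7 := Summable.tsum_eq_zero_add hshift
    rw [← h4, h5, zero_add, h6, h7]
    have e0 : 1 / (((j : ℝ) + 1) ^ b * (((0 : ℕ) + j : ℝ) + 1) ^ a)
        = 1 / ((j : ℝ) + 1) ^ 6 := by
      push_cast
      rw [zero_add, ← pow_add]
      rw [show b + a = 6 by omega]
    rw [e0]
    congr 1
    refine tsum_congr fun i => ?_
    push_cast
    ring_nf
  rw [l1, ← lswap]
  rw [tsum_congr l3]
  have hTba : Summable (fun p : ℕ × ℕ => 1 / (((p.1 : ℝ) + 1) ^ b * ((p.1 : ℝ) + p.2 + 2) ^ a)) :=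
    summableT hb ha (by omega)
  have hsum2 : Summable fun j : ℕ => ∑' i : ℕ, 1 / (((j : ℝ) + 1) ^ b * ((j : ℝ) + i + 2) ^ a) :=
    hTba.prod
  rw [Summable.tsum_add (sumz (by omega)) hsum2]
  congr 1
  rw [TT]
  exact (Summable.tsum_prod hTba).symm

noncomputable def G (c r : ℕ) (k : ℕ) : ℝ :=
  ∑' m : ℕ, 1 / (((k : ℝ) + 1) ^ c * ((k : ℝ) + m + 2) ^ r)

lemma G_summable {c r : ℕ} (hc : 1 ≤ c) (hr : 2 ≤ r) (hcr : 6 ≤ c + r) :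
    Summable (G c r) :=
  (summableT hc hr hcr).prod

lemma G_tsum {c r : ℕ} (hc : 1 ≤ c) (hr : 2 ≤ r) (hcr : 6 ≤ c + r) :
    ∑' k : ℕ, G c r k = TT c r :=
  (Summable.tsum_prod (summableT hc hr hcr)).symm

lemma G_eq' (c r : ℕ) (k : ℕ) :
    G c r k = (1 / ((k : ℝ) + 1) ^ c) * ∑' m : ℕ, 1 / ((m : ℝ) + (k : ℝ) + 2) ^ r := by
  rw [G, ← tsum_mul_left]
  exact tsum_congr fun m => by push_cast; ring

lemma G_hasSum {c r : ℕ} (hr : 2 ≤ r) (k : ℕ) :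
    HasSum (fun m : ℕ => (1 / ((k : ℝ) + 1) ^ c) * (1 / ((m : ℝ) + (k : ℝ) + 2) ^ r))
      (G c r k) := by
  rw [G_eq']
  exact ((sumz_shift hr k).hasSum).mul_left _

lemma keyA (k : ℕ) :
    ∑' m : ℕ, 1 / (((m : ℝ) + 1) ^ 2 * ((m : ℝ) + k + 2) ^ 4)
      = -4 * (Hg 1 (k + 1) * (1 / ((k : ℝ) + 1) ^ 5)) + (1 / ((k : ℝ) + 1) ^ 4) * zetaR 2
        + 3 * G 4 2 k + 2 * G 3 3 k + G 2 4 k := by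
  have h1 := (tele2 k).mul_left (-4 * (1 / ((k : ℝ) + 1) ^ 5))
  have h2 := ((sumz (le_refl 2)).hasSum).mul_left (1 / ((k : ℝ) + 1) ^ 4)
  have h3 := (G_hasSum (c := 4) (r := 2) (by norm_num) k).mul_left 3
  have h4 := (G_hasSum (c := 3) (r := 3) (by norm_num) k).mul_left 2
  have h5 := G_hasSum (c := 2) (r := 4) (by norm_num) k
  have H := (((h1.add h2).add h3).add h4).add h5
  have e1 : ∑' m : ℕ, 1 / (((m : ℝ) + 1) ^ 2 * ((m : ℝ) + k + 2) ^ 4)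
      = ∑' m : ℕ,
        (-4 * (1 / ((k : ℝ) + 1) ^ 5) * (1 / ((m : ℝ) + 1) - 1 / ((m : ℝ) + k + 2))
          + 1 / ((k : ℝ) + 1) ^ 4 * (1 / ((m : ℝ) + 1) ^ 2)
          + 3 * (1 / ((k : ℝ) + 1) ^ 4 * (1 / ((m : ℝ) + (k : ℝ) + 2) ^ 2))
          + 2 * (1 / ((k : ℝ) + 1) ^ 3 * (1 / ((m : ℝ) + (k : ℝ) + 2) ^ 3))
          + 1 / ((k : ℝ) + 1) ^ 2 * (1 / ((m : ℝ) + (k : ℝ) + 2) ^ 4)) := by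
    refine tsum_congr fun m => ?_
    have hm1 : ((m : ℝ) + 1) ≠ 0 := by positivity
    have hk1 : ((k : ℝ) + 1) ≠ 0 := by positivity
    have hmk : ((m : ℝ) + (k : ℝ) + 2) ≠ 0 := by positivity
    field_simp
    ring
  rw [e1, H.tsum_eq]
  have hz : (∑' n : ℕ, 1 / ((n : ℝ) + 1) ^ 2) = zetaR 2 := rfl
  rw [hz]
  ring

lemma keyB (k : ℕ) :
    ∑' m : ℕ, 1 / (((m : ℝ) + 1) ^ 1 * ((m : ℝ) + k + 2) ^ 5)
      = Hg 1 (k + 1) * (1 / ((k : ℝ) + 1) ^ 5)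
        - G 4 2 k - G 3 3 k - G 2 4 k - G 1 5 k := by
  have h1 := (tele2 k).mul_left (1 / ((k : ℝ) + 1) ^ 5)
  have h2 := G_hasSum (c := 4) (r := 2) (by norm_num) k
  have h3 := G_hasSum (c := 3) (r := 3) (by norm_num) k
  have h4 := G_hasSum (c := 2) (r := 4) (by norm_num) k
  have h5 := G_hasSum (c := 1) (r := 5) (by norm_num) k
  have H := (((h1.sub h2).sub h3).sub h4).sub h5
  have e1 : ∑' m : ℕ, 1 / (((m : ℝ) + 1) ^ 1 * ((m : ℝ) + k + 2) ^ 5)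
      = ∑' m : ℕ,
        (1 / ((k : ℝ) + 1) ^ 5 * (1 / ((m : ℝ) + 1) - 1 / ((m : ℝ) + k + 2))
          - 1 / ((k : ℝ) + 1) ^ 4 * (1 / ((m : ℝ) + (k : ℝ) + 2) ^ 2)
          - 1 / ((k : ℝ) + 1) ^ 3 * (1 / ((m : ℝ) + (k : ℝ) + 2) ^ 3)
          - 1 / ((k : ℝ) + 1) ^ 2 * (1 / ((m : ℝ) + (k : ℝ) + 2) ^ 4)
          - 1 / ((k : ℝ) + 1) ^ 1 * (1 / ((m : ℝ) + (k : ℝ) + 2) ^ 5)) := by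
    refine tsum_congr fun m => ?_
    have hm1 : ((m : ℝ) + 1) ≠ 0 := by positivity
    have hk1 : ((k : ℝ) + 1) ≠ 0 := by positivity
    have hmk : ((m : ℝ) + (k : ℝ) + 2) ≠ 0 := by positivity
    field_simp
    ring
  rw [e1, H.tsum_eq]
  ring

lemma E1 : TT 2 4 = -4 * (∑' k : ℕ, Hg 1 (k + 1) * (1 / ((k : ℝ) + 1) ^ 5))
    + zetaR 4 * zetaR 2 + 3 * TT 4 2 + 2 * TT 3 3 + TT 2 4 := by
  have hsum : Summable (fun p : ℕ × ℕ => 1 / (((p.1 : ℝ) + 1) ^ 2 * ((p.1 : ℝ) + p.2 + 2) ^ 4)) :=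
    summableT (by norm_num) (by norm_num) (by norm_num)
  have hTT : TT 2 4 = ∑' (k : ℕ) (m : ℕ), 1 / (((m : ℝ) + 1) ^ 2 * ((m : ℝ) + k + 2) ^ 4) := by
    rw [TT, Summable.tsum_prod hsum]
    exact (Summable.tsum_comm (f := fun m k : ℕ => 1 / (((m : ℝ) + 1) ^ 2 * ((m : ℝ) + k + 2) ^ 4))
      hsum).symm
  have s1 : Summable (fun k : ℕ => -4 * (Hg 1 (k + 1) * (1 / ((k : ℝ) + 1) ^ 5))) :=
    (hSsum (le_refl 1) (by norm_num) (by norm_num)).mul_left (-4)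
  have s2 : Summable (fun k : ℕ => (1 / ((k : ℝ) + 1) ^ 4) * zetaR 2) :=
    (sumz (r := 4) (by norm_num)).mul_right (zetaR 2)
  have s3 : Summable (fun k : ℕ => 3 * G 4 2 k) :=
    (G_summable (by norm_num) (by norm_num) (by norm_num)).mul_left 3
  have s4 : Summable (fun k : ℕ => 2 * G 3 3 k) :=
    (G_summable (by norm_num) (by norm_num) (by norm_num)).mul_left 2
  have s5 : Summable (G 2 4) := G_summable (by norm_num) (by norm_num) (by norm_num)
  calc TT 2 4 = ∑' k : ℕ, (-4 * (Hg 1 (k + 1) * (1 / ((k : ℝ) + 1) ^ 5))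
        + (1 / ((k : ℝ) + 1) ^ 4) * zetaR 2 + 3 * G 4 2 k + 2 * G 3 3 k + G 2 4 k) := by
        rw [hTT]; exact tsum_congr fun k => keyA k
    _ = -4 * (∑' k : ℕ, Hg 1 (k + 1) * (1 / ((k : ℝ) + 1) ^ 5))
        + zetaR 4 * zetaR 2 + 3 * TT 4 2 + 2 * TT 3 3 + TT 2 4 := by
        rw [Summable.tsum_add (((s1.add s2).add s3).add s4) s5, Summable.tsum_add ((s1.add s2).add s3) s4,
          Summable.tsum_add (s1.add s2) s3, Summable.tsum_add s1 s2, tsum_mul_left, tsum_mul_right,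
          tsum_mul_left, tsum_mul_left,
          G_tsum (by norm_num) (by norm_num) (by norm_num),
          G_tsum (by norm_num) (by norm_num) (by norm_num),
          G_tsum (by norm_num) (by norm_num) (by norm_num)]
        rfl

lemma E2 : TT 1 5 = (∑' k : ℕ, Hg 1 (k + 1) * (1 / ((k : ℝ) + 1) ^ 5))
    - TT 4 2 - TT 3 3 - TT 2 4 - TT 1 5 := by
  have hsum : Summable (fun p : ℕ × ℕ => 1 / (((p.1 : ℝ) + 1) ^ 1 * ((p.1 : ℝ) + p.2 + 2) ^ 5)) :=
    summableT (by norm_num) (by norm_num) (by norm_num)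
  have hTT : TT 1 5 = ∑' (k : ℕ) (m : ℕ), 1 / (((m : ℝ) + 1) ^ 1 * ((m : ℝ) + k + 2) ^ 5) := by
    rw [TT, Summable.tsum_prod hsum]
    exact (Summable.tsum_comm (f := fun m k : ℕ => 1 / (((m : ℝ) + 1) ^ 1 * ((m : ℝ) + k + 2) ^ 5))
      hsum).symm
  have s1 : Summable (fun k : ℕ => Hg 1 (k + 1) * (1 / ((k : ℝ) + 1) ^ 5)) :=
    hSsum (le_refl 1) (by norm_num) (by norm_num)
  have s2 : Summable (G 4 2) := G_summable (by norm_num) (by norm_num) (by norm_num)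
  have s3 : Summable (G 3 3) := G_summable (by norm_num) (by norm_num) (by norm_num)
  have s4 : Summable (G 2 4) := G_summable (by norm_num) (by norm_num) (by norm_num)
  have s5 : Summable (G 1 5) := G_summable (by norm_num) (by norm_num) (by norm_num)
  calc TT 1 5 = ∑' k : ℕ, (Hg 1 (k + 1) * (1 / ((k : ℝ) + 1) ^ 5)
        - G 4 2 k - G 3 3 k - G 2 4 k - G 1 5 k) := by
        rw [hTT]; exact tsum_congr fun k => keyB k
    _ = (∑' k : ℕ, Hg 1 (k + 1) * (1 / ((k : ℝ) + 1) ^ 5))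
        - TT 4 2 - TT 3 3 - TT 2 4 - TT 1 5 := by
        rw [Summable.tsum_sub (((s1.sub s2).sub s3).sub s4) s5, Summable.tsum_sub ((s1.sub s2).sub s3) s4,
          Summable.tsum_sub (s1.sub s2) s3, Summable.tsum_sub s1 s2,
          G_tsum (by norm_num) (by norm_num) (by norm_num),
          G_tsum (by norm_num) (by norm_num) (by norm_num),
          G_tsum (by norm_num) (by norm_num) (by norm_num),
          G_tsum (by norm_num) (by norm_num) (by norm_num)]

lemma reflect {a b : ℕ} (ha : 2 ≤ a) (hb : 2 ≤ b) (hab : a + b = 6) :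
    zetaR a * zetaR b = zetaR 6 + TT b a + TT a b := by
  have h0 : zetaR a * zetaR b = ∑' n : ℕ, (1 / ((n : ℝ) + 1) ^ a) * zetaR b :=
    (tsum_mul_right).symm
  have h1 : ∀ n : ℕ, (1 / ((n : ℝ) + 1) ^ a) * zetaR b
      = Hg b (n + 1) * (1 / ((n : ℝ) + 1) ^ a) + G a b n := by
    intro n
    have hG : G a b n = (1 / ((n : ℝ) + 1) ^ a) * (zetaR b - Hg b (n + 1)) := by
      rw [G_eq' a b n, tail_eq hb n]
    rw [hG]; ring
  have hs1 : Summable (fun n : ℕ => Hg b (n + 1) * (1 / ((n : ℝ) + 1) ^ a)) :=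
    hSsum (by omega) ha (by omega)
  have hs2 : Summable (G a b) := G_summable (by omega) hb (by omega)
  rw [h0, tsum_congr h1, Summable.tsum_add hs1 hs2, S_eq (by omega) ha hab,
    G_tsum (by omega) hb (by omega)]

lemma bern6 : bernoulli' 6 = 1 / 42 := by
  have h5 : bernoulli' 5 = 0 := bernoulli'_eq_zero_of_odd (by decide) (by norm_num)
  rw [bernoulli'_def]
  have c2 : Nat.choose 6 2 = 15 := by decide
  have c4 : Nat.choose 6 4 = 15 := by decide
  norm_num [Finset.sum_range_succ, h5, c2, c4]

lemma hasSum_zeta_six : HasSum (fun n : ℕ => (1 : ℝ) / (n : ℝ) ^ 6) (π ^ 6 / 945) := by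
  convert hasSum_zeta_nat (k := 3) (by norm_num) using 1
  have hb : ((bernoulli 6 : ℚ) : ℝ) = 1 / 42 := by
    rw [bernoulli_eq_bernoulli'_of_ne_one (by norm_num), bern6]
    norm_num
  norm_num [Nat.factorial]
  rw [hb]
  ring

lemma zetaR_of_hasSum {r : ℕ} (hr : 1 ≤ r) {s : ℝ}
    (h : HasSum (fun n : ℕ => (1 : ℝ) / (n : ℝ) ^ r) s) : zetaR r = s := by
  have h2 : HasSum (fun n : ℕ => (1 : ℝ) / ((n : ℝ) + 1) ^ r) s := by
    have h0 : HasSum (fun n : ℕ => (1 : ℝ) / (n : ℝ) ^ r)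
        (s + ∑ i ∈ range 1, (1 : ℝ) / (i : ℝ) ^ r) := by
      convert h using 2
      simp [Finset.sum_range_one, zero_pow (by omega : r ≠ 0)]
    have h1 : HasSum (fun n : ℕ => (1 : ℝ) / ((n + 1 : ℕ) : ℝ) ^ r) s :=
      (hasSum_nat_add_iff (f := fun n : ℕ => (1 : ℝ) / (n : ℝ) ^ r) 1).mpr h0
    have he : (fun n : ℕ => (1 : ℝ) / ((n + 1 : ℕ) : ℝ) ^ r)
        = fun n : ℕ => (1 : ℝ) / ((n : ℝ) + 1) ^ r := by
      funext n
      push_cast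
      ring_nf
    rwa [he] at h1
  exact h2.tsum_eq

lemma zeta2_val : zetaR 2 = π ^ 2 / 6 := zetaR_of_hasSum (by norm_num) hasSum_zeta_two
lemma zeta4_val : zetaR 4 = π ^ 4 / 90 := zetaR_of_hasSum (by norm_num) hasSum_zeta_four
lemma zeta6_val : zetaR 6 = π ^ 6 / 945 := zetaR_of_hasSum (by norm_num) hasSum_zeta_six

lemma z24 : zetaR 2 * zetaR 4 = 7 / 4 * zetaR 6 := by
  rw [zeta2_val, zeta4_val, zeta6_val]
  ring

/-- `∑_{n≥1} H_{n,4}/n^2 = (25/3)ζ(6) − 3ζ(2)ζ(4) − ζ(3)^2`. -/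
theorem stmt6 :
    ∑' n : ℕ, H4 (n + 1) / ((n + 1 : ℝ)) ^ 2 =
      25 / 3 * zetaR 6 - 3 * zetaR 2 * zetaR 4 - zetaR 3 ^ 2 := by
  have hL : ∑' n : ℕ, H4 (n + 1) / ((n + 1 : ℝ)) ^ 2
      = ∑' n : ℕ, Hg 4 (n + 1) * (1 / ((n : ℝ) + 1) ^ 2) := by
    refine tsum_congr fun n => ?_
    rw [mul_one_div]
    rfl
  rw [hL, S_eq (b := 4) (a := 2) (by norm_num) (by norm_num) (by norm_num)]
  have e1 := E1
  have e2 := E2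
  have e3 : (∑' k : ℕ, Hg 1 (k + 1) * (1 / ((k : ℝ) + 1) ^ 5)) = zetaR 6 + TT 1 5 :=
    S_eq (by norm_num) (by norm_num) (by norm_num)
  have e4 := reflect (a := 2) (b := 4) (by norm_num) (by norm_num) (by norm_num)
  have e5 := reflect (a := 3) (b := 3) (by norm_num) (by norm_num) (by norm_num)
  have hz := z24
  have hcomm : zetaR 4 * zetaR 2 = zetaR 2 * zetaR 4 := mul_comm _ _
  rw [pow_two]
  linarith [e1, e2, e3, e4, e5, hz, hcomm]
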